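/- Let M be a compact smooth manifold. Then every smooth function f : M → ℂ is a finite ℂ-linear combination of functions of the form x ↦ exp(i·ψ(x)) where ψ : M → ℝ is smooth; that is, the ℂ-linear span of {x ↦ exp(i·ψ(x)) : ψ : M → ℝ smooth} inside the algebra of smooth ℂ-valued functions on M is the whole algebra. -/

import Mathlib

open scoped Manifold

set_option maxHeartbeats 1000000

/-- Key step: a real smooth function, coerced to `ℂ`, lies in the span. -/
lemma real_mem_span {E : Type*} [NormedAddCommGroup E] [NormedSpace ℝ E]
    {H : Type*} [TopologicalSpace H] (IM : ModelWithCorners ℝ E H)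
    {M : Type*} [TopologicalSpace M] [ChartedSpace H M] [IsManifold IM (⊤ : ℕ∞) M]
    [CompactSpace M] (u : M → ℝ) (hu : ContMDiff IM 𝓘(ℝ, ℝ) (⊤ : ℕ∞) u) :
    (fun x => (u x : ℂ)) ∈ Submodule.span ℂ
      {g : M → ℂ | ∃ ψ : M → ℝ, ContMDiff IM 𝓘(ℝ, ℝ) (⊤ : ℕ∞) ψ ∧
        g = fun x => Complex.exp (Complex.I * ψ x)} := by
  obtain ⟨C, hC⟩ := (isCompact_range hu.continuous).isBounded.exists_norm_le
  set D : ℝ := |C| + 1 with hD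
  have hDpos : 0 < D := by positivity
  have hbound : ∀ x, |D⁻¹ * u x| < 1 := by
    intro x
    have h1 : |u x| ≤ C := by simpa [Real.norm_eq_abs] using hC (u x) ⟨x, rfl⟩
    have h2 : |u x| < D := lt_of_le_of_lt h1 (by
      have := le_abs_self C; linarith)
    rw [abs_mul, abs_inv, abs_of_pos hDpos]
    rw [inv_mul_lt_one₀ hDpos] -- may fail; adjust
    exact h2
  set ψ : M → ℝ := fun x => Real.arcsin (D⁻¹ * u x) with hψdef
  have hψ : ContMDiff IM 𝓘(ℝ, ℝ) (⊤ : ℕ∞) ψ := by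
    intro x
    have h1 : ContMDiffAt IM 𝓘(ℝ, ℝ) (⊤ : ℕ∞) (fun x => D⁻¹ * u x) x :=
      (contMDiff_const.mul hu) x
    have hb := hbound x
    have hne1 : D⁻¹ * u x ≠ 1 := by
      intro h; rw [h] at hb; simp at hb
    have hne2 : D⁻¹ * u x ≠ -1 := by
      intro h; rw [h] at hb; simp at hb
    have h2 : ContDiffAt ℝ (((⊤ : ℕ∞) : WithTop ℕ∞)) Real.arcsin (D⁻¹ * u x) :=
      Real.contDiffAt_arcsin hne2 hne1
    exact ContDiffAt.comp_contMDiffAt (g := Real.arcsin) h2 h1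
  have hsin : ∀ x, Real.sin (ψ x) = D⁻¹ * u x := by
    intro x
    exact Real.sin_arcsin (by linarith [abs_lt.mp (hbound x)] ) (by linarith [abs_lt.mp (hbound x)])
  have hmem : ∀ (φ : M → ℝ), ContMDiff IM 𝓘(ℝ, ℝ) (⊤ : ℕ∞) φ →
      (fun x => Complex.exp (Complex.I * φ x)) ∈ Submodule.span ℂ
      {g : M → ℂ | ∃ ψ : M → ℝ, ContMDiff IM 𝓘(ℝ, ℝ) (⊤ : ℕ∞) ψ ∧
        g = fun x => Complex.exp (Complex.I * ψ x)} := by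
    intro φ hφ
    exact Submodule.subset_span ⟨φ, hφ, rfl⟩
  have key : (fun x => (u x : ℂ)) =
      ((D : ℂ) * Complex.I / 2) • (fun x => Complex.exp (Complex.I * ((-ψ x : ℝ) : ℂ)))
      - ((D : ℂ) * Complex.I / 2) • (fun x => Complex.exp (Complex.I * ψ x)) := by
    funext x
    have h1 : (u x : ℂ) = (D : ℂ) * Complex.sin (ψ x) := by
      have : (Real.sin (ψ x) : ℂ) = Complex.sin (ψ x) := Complex.ofReal_sin _
      rw [← this, hsin x]
      have hD0 : (D : ℂ) ≠ 0 := by exact_mod_cast hDpos.ne'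
      push_cast
      field_simp
    simp only [Pi.sub_apply, Pi.smul_apply, smul_eq_mul]
    rw [h1, Complex.sin]
    have e1 : (-(↑(ψ x) : ℂ) * Complex.I) = Complex.I * ((-(ψ x) : ℝ) : ℂ) := by
      push_cast; ring
    have e2 : ((↑(ψ x) : ℂ) * Complex.I) = Complex.I * ((ψ x : ℝ) : ℂ) := mul_comm _ _
    rw [e1, e2]
    rw [show Complex.I * ((-ψ x : ℝ) : ℂ) = -(Complex.I * ((ψ x : ℝ) : ℂ)) by push_cast; ring]
    ring
  rw [key]
  have m1 := hmem (fun x => -ψ x) hψ.neg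
  have m2 := hmem ψ hψ
  exact Submodule.sub_mem _ (Submodule.smul_mem _ _ m1) (Submodule.smul_mem _ _ m2)

/-- On a compact smooth manifold `M`, every smooth function `f : M → ℂ` is a finite
ℂ-linear combination of functions of the form `x ↦ exp (i * ψ x)` with `ψ : M → ℝ` smooth. -/
theorem stmt_1 {E : Type*} [NormedAddCommGroup E] [NormedSpace ℝ E]
    {H : Type*} [TopologicalSpace H] (IM : ModelWithCorners ℝ E H)
    {M : Type*} [TopologicalSpace M] [ChartedSpace H M] [IsManifold IM (⊤ : ℕ∞) M]
    [CompactSpace M] (f : M → ℂ) (hf : ContMDiff IM 𝓘(ℝ, ℂ) (⊤ : ℕ∞) f) :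
    f ∈ Submodule.span ℂ
      {g : M → ℂ | ∃ ψ : M → ℝ, ContMDiff IM 𝓘(ℝ, ℝ) (⊤ : ℕ∞) ψ ∧
        g = fun x => Complex.exp (Complex.I * ψ x)} := by
  have hre : ContMDiff IM 𝓘(ℝ, ℝ) (⊤ : ℕ∞) (fun x => (f x).re) :=
    Complex.reCLM.contDiff.comp_contMDiff hf
  have him : ContMDiff IM 𝓘(ℝ, ℝ) (⊤ : ℕ∞) (fun x => (f x).im) :=
    Complex.imCLM.contDiff.comp_contMDiff hf
  have key : f = (fun x => ((f x).re : ℂ)) + Complex.I • (fun x => ((f x).im : ℂ)) := by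
    funext x
    simp only [Pi.add_apply, Pi.smul_apply, smul_eq_mul]
    rw [mul_comm, Complex.re_add_im]
  rw [key]
  exact Submodule.add_mem _ (real_mem_span IM _ hre)
    (Submodule.smul_mem _ _ (real_mem_span IM _ him))
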